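/- Let y : [0,t] → ℂ be continuously differentiable with 1 + y(s)² ≠ 0 for all s ∈ [0,t]. For N ∈ ℕ, set Pₙ = ∏_{j=1}^{N-1} [1 + (y(jt/N)/(1+y(jt/N)²))·(y((j+1)t/N) - y(jt/N))]. If the factors are all nonzero for large N, then Pₙ converges as N → ∞ to exp(∫₀ᵗ y(s)y'(s)/(1+y(s)²) ds). -/

import Mathlib

open Complex Filter Finset

theorem continuum_limit_of_no_jump_products (t : ℝ) (ht : 0 < t) (y : ℝ → ℂ)
    (hy : ContDiffOn ℝ 1 y (Set.Icc 0 t))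
    (hnz : ∀ s ∈ Set.Icc (0 : ℝ) t, 1 + y s ^ 2 ≠ 0)
    (hfac : ∀ᶠ N : ℕ in atTop, ∀ j ∈ Finset.Icc 1 (N - 1),
      1 + y ((j : ℝ) * t / N) / (1 + y ((j : ℝ) * t / N) ^ 2) *
            (y (((j : ℝ) + 1) * t / N) - y ((j : ℝ) * t / N)) ≠ 0) :
    Tendsto
      (fun N : ℕ => ∏ j ∈ Finset.Icc 1 (N - 1),
        (1 + y ((j : ℝ) * t / N) / (1 + y ((j : ℝ) * t / N) ^ 2) *
              (y (((j : ℝ) + 1) * t / N) - y ((j : ℝ) * t / N))))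
      atTop
      (nhds (Complex.exp (∫ s in (0 : ℝ)..t, y s * deriv y s / (1 + y s ^ 2)))) := by
  have hud : UniqueDiffOn ℝ (Set.Icc (0:ℝ) t) := uniqueDiffOn_Icc ht
  set Y : ℝ → ℂ := derivWithin y (Set.Icc 0 t) with hYdef
  have hycont : ContinuousOn y (Set.Icc 0 t) := hy.continuousOn
  have hYcont : ContinuousOn Y (Set.Icc 0 t) := hy.continuousOn_derivWithin hud le_rfl
  set g : ℝ → ℂ := fun s => y s / (1 + y s ^ 2) with hgdef
  have hgcont : ContinuousOn g (Set.Icc 0 t) :=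
    hycont.div (continuousOn_const.add (hycont.pow 2)) hnz
  have hgYcont : ContinuousOn (fun s => g s * Y s) (Set.Icc 0 t) := hgcont.mul hYcont
  -- derivative at interior points
  have hder : ∀ x ∈ Set.Ioo (0:ℝ) t, HasDerivAt y (Y x) x := by
    intro x hx
    exact ((hy.differentiableOn one_ne_zero x (Set.Ioo_subset_Icc_self hx)).hasDerivWithinAt).hasDerivAt
      (Icc_mem_nhds hx.1 hx.2)
  -- fundamental theorem of calculus
  have hFTC : ∀ a b : ℝ, 0 ≤ a → a ≤ b → b ≤ t → (∫ s in a..b, Y s) = y b - y a := by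
    intro a b ha hab hbt
    refine intervalIntegral.integral_eq_sub_of_hasDeriv_right_of_le hab
      (hycont.mono (Set.Icc_subset_Icc ha hbt)) (fun x hx => ?_) ?_
    · exact (hder x ⟨lt_of_le_of_lt ha hx.1, lt_of_lt_of_le hx.2 hbt⟩).hasDerivWithinAt
    · exact (hYcont.mono (by rw [Set.uIcc_of_le hab]; exact Set.Icc_subset_Icc ha hbt)).intervalIntegrable
  -- uniform bounds
  obtain ⟨M, hM⟩ := isCompact_Icc.exists_bound_of_continuousOn hYcont
  obtain ⟨G, hG⟩ := isCompact_Icc.exists_bound_of_continuousOn hgcont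
  have hM0 : 0 ≤ M := le_trans (norm_nonneg _) (hM 0 ⟨le_rfl, ht.le⟩)
  have hG0 : 0 ≤ G := le_trans (norm_nonneg _) (hG 0 ⟨le_rfl, ht.le⟩)
  -- integrability helper
  have hpint : ∀ (f : ℝ → ℂ), ContinuousOn f (Set.Icc 0 t) → ∀ (u v : ℝ),
      u ∈ Set.Icc 0 t → v ∈ Set.Icc 0 t → IntervalIntegrable f MeasureTheory.volume u v := by
    intro f hf u v hu hv
    exact (hf.mono (Set.uIcc_subset_Icc hu hv)).intervalIntegrable
  -- mesh point membership
  have hmem : ∀ (N k : ℕ), k ≤ N → ((k:ℝ) * t / N) ∈ Set.Icc 0 t := by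
    intro N k hk
    rcases Nat.eq_zero_or_pos N with h0 | h0
    · subst h0
      simp only [Nat.cast_zero, div_zero]
      exact ⟨le_rfl, ht.le⟩
    · have hN : (0:ℝ) < N := Nat.cast_pos.mpr h0
      constructor
      · positivity
      · rw [div_le_iff₀ hN]
        have h1 : (k:ℝ) ≤ N := Nat.cast_le.mpr hk
        nlinarith
  -- increment bound
  have hstep : ∀ a b : ℝ, 0 ≤ a → a ≤ b → b ≤ t → ‖y b - y a‖ ≤ M * (b - a) := by
    intro a b ha hab hbt
    rw [← hFTC a b ha hab hbt]
    calc ‖∫ s in a..b, Y s‖ ≤ M * |b - a| := by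
          refine intervalIntegral.norm_integral_le_of_norm_le_const (fun x hx => ?_)
          rw [Set.uIoc_of_le hab] at hx
          exact hM x ⟨le_trans ha hx.1.le, le_trans hx.2 hbt⟩
      _ = M * (b - a) := by rw [_root_.abs_of_nonneg (sub_nonneg.mpr hab)]
  set a : ℕ → ℕ → ℂ := fun N j => y ((j : ℝ) * t / N) / (1 + y ((j : ℝ) * t / N) ^ 2) *
      (y (((j : ℝ) + 1) * t / N) - y ((j : ℝ) * t / N)) with hadef
  have hNpos : ∀ {N j : ℕ}, j ∈ Finset.Icc 1 (N-1) → 1 ≤ j ∧ j + 1 ≤ N := by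
    intro N j hj
    simp only [Finset.mem_Icc] at hj
    omega
  -- norm bound for each factor
  have hanorm : ∀ (N j : ℕ), j ∈ Finset.Icc 1 (N-1) → ‖a N j‖ ≤ G * M * t / N := by
    intro N j hj
    obtain ⟨hj1, hjN⟩ := hNpos hj
    have hNR : (0:ℝ) < N := Nat.cast_pos.mpr (by omega)
    have h1 : ((j:ℝ) * t / N) ∈ Set.Icc 0 t := hmem N j (by omega)
    have h2 : (((j:ℝ)+1) * t / N) ∈ Set.Icc 0 t := by
      have h := hmem N (j+1) hjN
      push_cast at h
      exact h
    have hle : (j:ℝ) * t / N ≤ ((j:ℝ)+1) * t / N := by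
      gcongr
      linarith
    have hNne : (N:ℝ) ≠ 0 := ne_of_gt hNR
    have hdiffeq : ((j:ℝ)+1) * t / N - (j:ℝ) * t / N = t / N := by
      field_simp
      ring
    calc ‖a N j‖ = ‖g ((j:ℝ) * t / N)‖ * ‖y (((j:ℝ)+1) * t / N) - y ((j:ℝ) * t / N)‖ := by
          rw [show a N j = g ((j:ℝ) * t / N) *
            (y (((j:ℝ)+1) * t / N) - y ((j:ℝ) * t / N)) from rfl, norm_mul]
      _ ≤ G * (M * (((j:ℝ)+1) * t / N - (j:ℝ) * t / N)) := by
          refine mul_le_mul (hG _ h1) (hstep _ _ h1.1 hle h2.2) (norm_nonneg _) hG0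
      _ = G * M * t / N := by rw [hdiffeq]; ring
  set S : ℕ → ℂ := fun N => ∑ j ∈ Finset.Icc 1 (N-1), a N j with hSdef
  set I0 : ℂ := ∫ s in (0:ℝ)..t, g s * Y s with hI0def
  -- Step A: Riemann-Stieltjes sums converge to the integral
  have hSA : Tendsto S atTop (nhds I0) := by
    refine Metric.tendsto_nhds.mpr (fun ε' hε' => ?_)
    set ε := ε' / (2 * (M * t + 1)) with hεdef
    have hε : 0 < ε := by positivity
    obtain ⟨δ, hδ0, hδ⟩ := Metric.uniformContinuousOn_iff.mp
      (isCompact_Icc.uniformContinuousOn_of_continuous hgcont) ε hε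
    have hev1 : ∀ᶠ N : ℕ in atTop, t / N < δ :=
      (tendsto_const_div_atTop_nhds_zero_nat t).eventually_lt_const hδ0
    have hev2 : ∀ᶠ N : ℕ in atTop, G * M * t / N < ε' / 2 :=
      (tendsto_const_div_atTop_nhds_zero_nat (G*M*t)).eventually_lt_const (by positivity)
    filter_upwards [hev1, hev2, eventually_ge_atTop 2] with N h1 h2 hN2
    have hNR : (0:ℝ) < N := Nat.cast_pos.mpr (by omega)
    have hNne : (N:ℝ) ≠ 0 := ne_of_gt hNR
    set p : ℕ → ℝ := fun k => ((k:ℝ)+1) * t / N with hpdef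
    have hp0 : p 0 = t / N := by simp [hpdef]
    have hplast : p (N-1) = t := by
      simp only [hpdef]
      have hc : ((N-1:ℕ):ℝ) = (N:ℝ) - 1 := by
        push_cast [Nat.cast_sub (by omega : 1 ≤ N)]
        ring
      rw [hc]
      have hc2 : (N:ℝ) - 1 + 1 = N := by ring
      rw [hc2]
      field_simp
    have hpmem : ∀ k : ℕ, k + 1 ≤ N → p k ∈ Set.Icc 0 t := by
      intro k hk
      have h := hmem N (k+1) hk
      push_cast at h
      exact h
    have hpmono : ∀ k : ℕ, p k ≤ p (k+1) := by
      intro k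
      simp only [hpdef]
      gcongr
      · push_cast; linarith
    have hpdiff : ∀ k : ℕ, p (k+1) - p k = t / N := by
      intro k
      simp only [hpdef]
      push_cast
      field_simp
      ring
    have hadj : ∑ k ∈ Finset.range (N-1), (∫ u in p k..p (k+1), g u * Y u)
        = ∫ u in (t/(N:ℝ))..t, g u * Y u := by
      rw [← hp0, ← hplast]
      exact intervalIntegral.sum_integral_adjacent_intervals
        (fun k hk => hpint _ hgYcont _ _ (hpmem k (by omega)) (hpmem (k+1) (by omega)))
    have hSsum : S N = ∑ k ∈ Finset.range (N-1), g (p k) * (y (p (k+1)) - y (p k)) := by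
      have hIccIco : Finset.Icc 1 (N-1) = Finset.Ico 1 N := by
        rw [← Finset.Ico_add_one_right_eq_Icc]
        congr 1
        omega
      show (∑ j ∈ Finset.Icc 1 (N-1), a N j) = _
      rw [hIccIco, Finset.sum_Ico_eq_sum_range]
      refine Finset.sum_congr rfl (fun k hk => ?_)
      have e1 : ((1+k:ℕ):ℝ) * t / N = p k := by simp only [hpdef]; push_cast; ring
      have e2 : (((1+k:ℕ):ℝ)+1) * t / N = p (k+1) := by simp only [hpdef]; push_cast; ring
      show y (((1+k:ℕ):ℝ) * t / N) / (1 + y (((1+k:ℕ):ℝ) * t / N) ^ 2) *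
        (y ((((1+k:ℕ):ℝ)+1) * t / N) - y (((1+k:ℕ):ℝ) * t / N)) = _
      rw [e1, e2]
    have hpiece : ∀ k : ℕ, k + 1 + 1 ≤ N →
        g (p k) * (y (p (k+1)) - y (p k)) = ∫ u in p k..p (k+1), g (p k) * Y u := by
      intro k hk
      rw [intervalIntegral.integral_const_mul,
        hFTC (p k) (p (k+1)) (hpmem k (by omega)).1 (hpmono k) (hpmem (k+1) hk).2]
    have hdiff : ‖S N - ∫ u in (t/(N:ℝ))..t, g u * Y u‖ ≤ ε * (M * t) := by
      rw [hSsum, ← hadj, ← Finset.sum_sub_distrib]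
      have hterm : ∀ k ∈ Finset.range (N-1),
          ‖g (p k) * (y (p (k+1)) - y (p k)) - ∫ u in p k..p (k+1), g u * Y u‖
            ≤ ε * M * (t / N) := by
        intro k hk
        simp only [Finset.mem_range] at hk
        rw [hpiece k (by omega), ← intervalIntegral.integral_sub
          ((hpint Y hYcont _ _ (hpmem k (by omega)) (hpmem (k+1) (by omega))).const_mul (g (p k)))
          (hpint _ hgYcont _ _ (hpmem k (by omega)) (hpmem (k+1) (by omega)))]
        have hb : ∀ u ∈ Set.uIoc (p k) (p (k+1)), ‖g (p k) * Y u - g u * Y u‖ ≤ ε * M := by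
          intro u hu
          rw [Set.uIoc_of_le (hpmono k)] at hu
          have hu1 : u ∈ Set.Icc 0 t :=
            ⟨le_trans (hpmem k (by omega)).1 hu.1.le, le_trans hu.2 (hpmem (k+1) (by omega)).2⟩
          have hd : dist (p k) u < δ := by
            rw [Real.dist_eq, abs_sub_comm, _root_.abs_of_nonneg (sub_nonneg.mpr hu.1.le)]
            have h3 : u - p k ≤ t / N := by
              have := hpdiff k
              linarith [hu.2]
            linarith
          have hgd : ‖g (p k) - g u‖ ≤ ε := by
            have h4 := hδ (p k) (hpmem k (by omega)) u hu1 hd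
            rw [dist_eq_norm] at h4
            exact h4.le
          calc ‖g (p k) * Y u - g u * Y u‖ = ‖g (p k) - g u‖ * ‖Y u‖ := by
                rw [← sub_mul, norm_mul]
            _ ≤ ε * M := mul_le_mul hgd (hM u hu1) (norm_nonneg _) hε.le
        calc ‖∫ u in p k..p (k+1), (g (p k) * Y u - g u * Y u)‖
            ≤ (ε * M) * |p (k+1) - p k| := intervalIntegral.norm_integral_le_of_norm_le_const hb
          _ = ε * M * (t / N) := by rw [hpdiff k, _root_.abs_of_nonneg (by positivity)]
      calc ‖∑ k ∈ Finset.range (N-1),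
            (g (p k) * (y (p (k+1)) - y (p k)) - ∫ u in p k..p (k+1), g u * Y u)‖
          ≤ ∑ k ∈ Finset.range (N-1),
            ‖g (p k) * (y (p (k+1)) - y (p k)) - ∫ u in p k..p (k+1), g u * Y u‖ :=
            norm_sum_le _ _
        _ ≤ ∑ _k ∈ Finset.range (N-1), ε * M * (t / N) := Finset.sum_le_sum hterm
        _ = ((N-1:ℕ):ℝ) * (ε * M * (t / N)) := by
            rw [Finset.sum_const, Finset.card_range, nsmul_eq_mul]
        _ ≤ (N:ℝ) * (ε * M * (t / N)) := by
            refine mul_le_mul_of_nonneg_right (Nat.cast_le.mpr (by omega)) (by positivity)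
        _ = ε * (M * t) := by field_simp
    have htN : t / (N:ℝ) ∈ Set.Icc 0 t := by
      constructor
      · positivity
      · rw [div_le_iff₀ hNR]
        have h5 : (1:ℝ) ≤ N := by exact_mod_cast (by omega : 1 ≤ N)
        nlinarith
    have hsplit : I0 = (∫ u in (0:ℝ)..(t/(N:ℝ)), g u * Y u) + ∫ u in (t/(N:ℝ))..t, g u * Y u := by
      rw [hI0def, ← intervalIntegral.integral_add_adjacent_intervals
        (hpint _ hgYcont 0 (t/(N:ℝ)) ⟨le_rfl, ht.le⟩ htN)
        (hpint _ hgYcont (t/(N:ℝ)) t htN ⟨ht.le, le_rfl⟩)]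
    have hfirst : ‖∫ u in (0:ℝ)..(t/(N:ℝ)), g u * Y u‖ ≤ G * M * t / N := by
      calc ‖∫ u in (0:ℝ)..(t/(N:ℝ)), g u * Y u‖ ≤ (G * M) * |t/(N:ℝ) - 0| := by
            refine intervalIntegral.norm_integral_le_of_norm_le_const (fun u hu => ?_)
            rw [Set.uIoc_of_le (by positivity)] at hu
            have hu1 : u ∈ Set.Icc 0 t := ⟨hu.1.le, le_trans hu.2 htN.2⟩
            rw [norm_mul]
            exact mul_le_mul (hG u hu1) (hM u hu1) (norm_nonneg _) hG0
        _ = G * M * t / N := by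
            rw [sub_zero, _root_.abs_of_nonneg (by positivity)]
            ring
    rw [dist_eq_norm]
    have hre : S N - I0 = (S N - ∫ u in (t/(N:ℝ))..t, g u * Y u)
        - ∫ u in (0:ℝ)..(t/(N:ℝ)), g u * Y u := by
      rw [hsplit]; ring
    rw [hre]
    have hεhalf : ε * (M * t) ≤ ε' / 2 := by
      rw [hεdef, div_mul_eq_mul_div, div_le_div_iff₀ (by positivity) (by norm_num)]
      nlinarith [mul_nonneg hM0 ht.le, hε'.le]
    calc ‖(S N - ∫ u in (t/(N:ℝ))..t, g u * Y u) - ∫ u in (0:ℝ)..(t/(N:ℝ)), g u * Y u‖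
        ≤ ‖S N - ∫ u in (t/(N:ℝ))..t, g u * Y u‖ + ‖∫ u in (0:ℝ)..(t/(N:ℝ)), g u * Y u‖ :=
          norm_sub_le _ _
      _ ≤ ε * (M * t) + G * M * t / N := add_le_add hdiff hfirst
      _ < ε' / 2 + ε' / 2 := by
          have := lt_of_le_of_lt (add_le_add_right hεhalf (G * M * t / N))
            (add_lt_add_left h2 (ε'/2))
          linarith
      _ = ε' := by ring
  -- Step B: sum of logs minus S tends to 0
  have hLS : Tendsto (fun N : ℕ =>
      (∑ j ∈ Finset.Icc 1 (N-1), Complex.log (1 + a N j)) - S N) atTop (nhds 0) := by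
    have hbd : Tendsto (fun N : ℕ => (G*M*t)^2 / N) atTop (nhds 0) :=
      tendsto_const_div_atTop_nhds_zero_nat _
    refine squeeze_zero_norm' ?_ hbd
    have hev : ∀ᶠ N : ℕ in atTop, G*M*t/(N:ℝ) ≤ 1/2 :=
      ((tendsto_const_div_atTop_nhds_zero_nat (G*M*t)).eventually_lt_const (by norm_num :
        (0:ℝ) < 1/2)).mono (fun N h => h.le)
    filter_upwards [hev, eventually_ge_atTop 1] with N hN hN1
    have hNR : (0:ℝ) < N := Nat.cast_pos.mpr (by omega)
    have hNne : (N:ℝ) ≠ 0 := ne_of_gt hNR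
    rw [show S N = ∑ j ∈ Finset.Icc 1 (N-1), a N j from rfl, ← Finset.sum_sub_distrib]
    have hterm : ∀ j ∈ Finset.Icc 1 (N-1),
        ‖Complex.log (1 + a N j) - a N j‖ ≤ (G*M*t/(N:ℝ))^2 := by
      intro j hj
      have hz : ‖a N j‖ ≤ G*M*t/(N:ℝ) := hanorm N j hj
      have hz2 : ‖a N j‖ ≤ 1/2 := le_trans hz hN
      have hz1 : ‖a N j‖ < 1 := lt_of_le_of_lt hz2 (by norm_num)
      have h6 := Complex.norm_log_one_add_sub_self_le hz1
      have h7 : (1 - ‖a N j‖)⁻¹ ≤ 2 := by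
        rw [show (2:ℝ) = (1/2)⁻¹ by norm_num]
        exact inv_anti₀ (by norm_num) (by linarith)
      calc ‖Complex.log (1 + a N j) - a N j‖ ≤ ‖a N j‖^2 * (1 - ‖a N j‖)⁻¹ / 2 := h6
        _ ≤ ‖a N j‖^2 * 2 / 2 := by
            have h8 := mul_le_mul_of_nonneg_left h7 (sq_nonneg ‖a N j‖)
            linarith
        _ = ‖a N j‖^2 := by ring
        _ ≤ (G*M*t/(N:ℝ))^2 := by
            exact pow_le_pow_left₀ (norm_nonneg _) hz 2
    calc ‖∑ j ∈ Finset.Icc 1 (N-1), (Complex.log (1 + a N j) - a N j)‖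
        ≤ ∑ j ∈ Finset.Icc 1 (N-1), ‖Complex.log (1 + a N j) - a N j‖ := norm_sum_le _ _
      _ ≤ ∑ _j ∈ Finset.Icc 1 (N-1), (G*M*t/(N:ℝ))^2 := Finset.sum_le_sum hterm
      _ = ((N-1:ℕ):ℝ) * (G*M*t/(N:ℝ))^2 := by
          rw [Finset.sum_const, Nat.card_Icc, nsmul_eq_mul]
          congr 2
      _ ≤ (N:ℝ) * (G*M*t/(N:ℝ))^2 := by
          exact mul_le_mul_of_nonneg_right (Nat.cast_le.mpr (by omega)) (by positivity)
      _ = (G*M*t)^2 / N := by field_simp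
  -- L tends to I0
  have hL : Tendsto (fun N : ℕ => ∑ j ∈ Finset.Icc 1 (N-1), Complex.log (1 + a N j))
      atTop (nhds I0) := by
    have h8 := hSA.add hLS
    rw [add_zero] at h8
    have h9 : (fun N : ℕ => S N + ((∑ j ∈ Finset.Icc 1 (N-1), Complex.log (1 + a N j)) - S N))
        = fun N : ℕ => ∑ j ∈ Finset.Icc 1 (N-1), Complex.log (1 + a N j) := by
      funext N; ring
    rwa [h9] at h8
  -- Step C: product equals exp of sum of logs eventually
  have hexp : Tendsto (fun N : ℕ =>
      Complex.exp (∑ j ∈ Finset.Icc 1 (N-1), Complex.log (1 + a N j)))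
      atTop (nhds (Complex.exp I0)) := (Complex.continuous_exp.tendsto I0).comp hL
  have heq : ∀ᶠ N : ℕ in atTop,
      Complex.exp (∑ j ∈ Finset.Icc 1 (N-1), Complex.log (1 + a N j))
        = ∏ j ∈ Finset.Icc 1 (N-1), (1 + a N j) := by
    filter_upwards [hfac] with N hN
    rw [Complex.exp_sum]
    exact Finset.prod_congr rfl (fun j hj => Complex.exp_log (hN j hj))
  have hgoal1 : Tendsto (fun N : ℕ => ∏ j ∈ Finset.Icc 1 (N-1), (1 + a N j))
      atTop (nhds (Complex.exp I0)) := hexp.congr' heq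
  -- Step D: identify the integral
  have hIeq : I0 = ∫ s in (0:ℝ)..t, y s * deriv y s / (1 + y s ^ 2) := by
    rw [hI0def]
    apply intervalIntegral.integral_congr_ae
    have hae : ∀ᵐ x : ℝ, x ≠ t := by
      refine MeasureTheory.ae_iff.mpr ?_
      have hset : {x : ℝ | ¬ x ≠ t} = {t} := by
        ext x; simp
      rw [hset]
      exact Real.volume_singleton
    filter_upwards [hae] with x hx hxI
    rw [Set.uIoc_of_le ht.le] at hxI
    have hxo : x ∈ Set.Ioo 0 t := ⟨hxI.1, lt_of_le_of_ne hxI.2 hx⟩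
    show g x * Y x = y x * deriv y x / (1 + y x ^ 2)
    rw [(hder x hxo).deriv]
    show y x / (1 + y x ^ 2) * Y x = y x * Y x / (1 + y x ^ 2)
    rw [div_mul_eq_mul_div]
  rw [hIeq] at hgoal1
  exact hgoal1
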